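/- Let μ be a closed Lagrangian subspace, and let θ, θ̃ be closed Lagrangian subspaces transverse to μ (θ∩μ = θ̃∩μ = {0}) which almost coincide (dim θ/(θ∩θ̃) = dim θ̃/(θ∩θ̃) < ∞). Writing θ and θ̃ as graphs of bounded operators T_θ, T_θ̃ : μ → J(μ), the difference T_θ − T_θ̃ is a finite rank operator. -/

import Mathlib

open Module RealInnerProductSpace

variable {H : Type*} [NormedAddCommGroup H] [InnerProductSpace ℝ H] [CompleteSpace H]

/-- A closed Lagrangian subspace of the real symplectic Hilbert space `H` with symplectic
form `ω(x,y) = ⟪J x, y⟫`: a closed subspace which equals its own `ω`-annihilator. -/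
def IsLagrangian (J : H →L[ℝ] H) (lam : Submodule ℝ H) : Prop :=
  IsClosed (lam : Set H) ∧ ∀ x : H, x ∈ lam ↔ ∀ y ∈ lam, ⟪J x, y⟫ = 0

/-- The pair `(lam, mu)` is a Fredholm pair of subspaces. -/
def IsFredholmPair (lam mu : Submodule ℝ H) : Prop :=
  FiniteDimensional ℝ ↥(lam ⊓ mu) ∧ IsClosed ((lam ⊔ mu : Submodule ℝ H) : Set H) ∧
    FiniteDimensional ℝ (H ⧸ (lam ⊔ mu))

/-- A bounded real-linear operator is Fredholm. -/
def IsFredholmR (T : H →L[ℝ] H) : Prop :=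
  FiniteDimensional ℝ (LinearMap.ker (T : H →ₗ[ℝ] H)) ∧ IsClosed (LinearMap.range (T : H →ₗ[ℝ] H) : Set H) ∧
    FiniteDimensional ℝ (H ⧸ LinearMap.range (T : H →ₗ[ℝ] H))

/-- The orthogonal projection onto a closed subspace, as an operator `H → H`. -/
noncomputable def projCLM (lam : Submodule ℝ H) [CompleteSpace lam] : H →L[ℝ] H :=
  lam.subtypeL.comp (lam.orthogonalProjection)

/-- The conjugation `τ_λ = 2P(λ) − Id` determined by the real structure `λ`. -/
noncomputable def conjOf (lam : Submodule ℝ H) [CompleteSpace lam] : H →L[ℝ] H :=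
  (2 : ℝ) • projCLM lam - 1

/-- Let `μ` be a closed Lagrangian subspace, and `θ, θ̃` closed Lagrangian subspaces
transverse to `μ` which almost coincide (their intersection has the same finite codimension
in each).  Writing `θ` and `θ̃` as graphs of bounded operators `T_θ, T_θ̃ : μ → J(μ)`, the
difference `T_θ − T_θ̃` is a finite rank operator. -/
theorem graph_difference_finiteRank
    (J : H →L[ℝ] H) (hJ2 : J ∘L J = -1)
    (hJorth : ∀ x y : H, ⟪J x, J y⟫ = ⟪x, y⟫)
    (mu theta theta' : Submodule ℝ H)
    (hmu : IsLagrangian J mu) (htheta : IsLagrangian J theta) (htheta' : IsLagrangian J theta')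
    (htrans : theta ⊓ mu = ⊥) (htrans' : theta' ⊓ mu = ⊥)
    (Tθ Tθ' : ↥mu →L[ℝ] H)
    (hTθrange : ∀ x : mu, Tθ x ∈ mu.map (J : H →ₗ[ℝ] H))
    (hTθ'range : ∀ x : mu, Tθ' x ∈ mu.map (J : H →ₗ[ℝ] H))
    (hgraph : (theta : Set H) = Set.range fun x : mu => (x : H) + Tθ x)
    (hgraph' : (theta' : Set H) = Set.range fun x : mu => (x : H) + Tθ' x)
    (halmost₁ : FiniteDimensional ℝ (theta ⧸ ((theta ⊓ theta').comap theta.subtype)))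
    (halmost₂ : FiniteDimensional ℝ (theta' ⧸ ((theta ⊓ theta').comap theta'.subtype)))
    (halmost₃ : Module.finrank ℝ (theta ⧸ ((theta ⊓ theta').comap theta.subtype)) =
      Module.finrank ℝ (theta' ⧸ ((theta ⊓ theta').comap theta'.subtype))) :
    FiniteDimensional ℝ (LinearMap.range ((Tθ - Tθ' : ↥mu →L[ℝ] H) : ↥mu →ₗ[ℝ] H)) := by
  classical
  -- mu ∩ J(mu) = 0
  have hdisj : ∀ z : H, z ∈ mu → z ∈ mu.map (J : H →ₗ[ℝ] H) → z = 0 := by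
    intro z hz hz'
    obtain ⟨w, hw, rfl⟩ := Submodule.mem_map.mp hz'
    have := (hmu.2 w).mp hw (J w) hz
    simpa [inner_self_eq_zero] using this
  have hmemθ : ∀ x : mu, (x : H) + Tθ x ∈ theta := by
    intro x
    have : ((x : H) + Tθ x) ∈ (theta : Set H) := by
      rw [hgraph]; exact ⟨x, rfl⟩
    exact this
  -- the graph map mu → theta
  let S : mu →ₗ[ℝ] theta :=
    { toFun := fun x => ⟨(x : H) + Tθ x, hmemθ x⟩
      map_add' := by
        intro x y; ext; simp only [Submodule.coe_add]
        push_cast [map_add]; abel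
      map_smul' := by
        intro c x; ext; simp only [Submodule.coe_smul, RingHom.id_apply]
        push_cast [map_smul]
        simp [smul_add] }
  set p : Submodule ℝ theta := (theta ⊓ theta').comap theta.subtype with hp
  let g : mu →ₗ[ℝ] (theta ⧸ p) := p.mkQ ∘ₗ S
  set T : mu →ₗ[ℝ] H := ((Tθ - Tθ' : mu →L[ℝ] H) : mu →ₗ[ℝ] H) with hT
  have hTapp : ∀ x : mu, T x = Tθ x - Tθ' x := by
    intro x; simp [hT]
  have hker₁ : LinearMap.ker T ≤ LinearMap.ker g := by
    intro x hx
    have hx0 : Tθ x = Tθ' x := by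
      have h0 : Tθ x - Tθ' x = 0 := by rw [← hTapp]; exact hx
      exact sub_eq_zero.mp h0
    have hmem' : ((x : H) + Tθ x) ∈ theta' := by
      have : ((x : H) + Tθ x) ∈ (theta' : Set H) := by
        rw [hgraph', hx0]; exact ⟨x, rfl⟩
      exact this
    have : S x ∈ p := by
      simp only [hp, Submodule.mem_comap, Submodule.subtype_apply]
      exact Submodule.mem_inf.mpr ⟨hmemθ x, hmem'⟩
    simpa [g, LinearMap.mem_ker, Submodule.Quotient.mk_eq_zero] using this
  have hker₂ : LinearMap.ker g ≤ LinearMap.ker T := by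
    intro x hx
    have hSx : S x ∈ p := by
      have : p.mkQ (S x) = 0 := hx
      simpa [Submodule.Quotient.mk_eq_zero] using this
    have hmem' : ((x : H) + Tθ x) ∈ theta' := by
      simp only [hp, Submodule.mem_comap, Submodule.subtype_apply] at hSx
      exact hSx.2
    have : ((x : H) + Tθ x) ∈ (theta' : Set H) := hmem'
    rw [hgraph'] at this
    obtain ⟨y, hy⟩ := this
    -- (y : H) + Tθ' y = (x : H) + Tθ x
    have hsub : ((x : H) - (y : H)) = Tθ' y - Tθ x := by
      have h := hy; dsimp only at h
      rw [sub_eq_sub_iff_add_eq_add, ← h]; exact add_comm _ _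
    have hzero : ((x : H) - (y : H)) = 0 := by
      apply hdisj
      · exact sub_mem x.2 y.2
      · rw [hsub]; exact sub_mem (hTθ'range y) (hTθrange x)
    have hxy : x = y := by
      ext; exact sub_eq_zero.mp hzero
    have : Tθ x = Tθ' x := by
      subst hxy
      have : Tθ' x = Tθ x := by
        have := hy; dsimp at this
        have h := add_left_cancel (a := (x : H)) (by simpa using this)
        exact h
      exact this.symm
    rw [LinearMap.mem_ker, hTapp, sub_eq_zero]; exact this
  -- quotient by ker T injects into theta ⧸ p, which is finite dimensional
  have hfdq : FiniteDimensional ℝ (mu ⧸ LinearMap.ker T) := by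
    let gbar := (LinearMap.ker T).liftQ g hker₁
    have hinj : Function.Injective gbar := by
      rw [← LinearMap.ker_eq_bot, Submodule.ker_liftQ_eq_bot']
      exact le_antisymm hker₁ hker₂
    exact FiniteDimensional.of_injective gbar hinj
  have e := T.quotKerEquivRange
  have : FiniteDimensional ℝ (LinearMap.range T) := LinearEquiv.finiteDimensional e
  have hrange : LinearMap.range T = LinearMap.range ((Tθ - Tθ' : ↥mu →L[ℝ] H) : ↥mu →ₗ[ℝ] H) := rfl
  rwa [hrange] at this
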